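/- Let {s_1,...,s_K} be an (M,K,L)-schedule sequence set with respect to a partition of the K nodes into W nonempty groups whose smallest group size is k ≥ 2. For a node N_i ∈ G_m, let α_i be the number of t ∈ Z_L with s_i(t) = T_m, and for any node N_j let β_j^m be the number of t ∈ Z_L with s_j(t) = R_m. Then for all i ≠ j and the group index m with N_i ∈ G_m, one has α_i · β_j^m ≥ (k−1)·L. -/

import Mathlib

/-- A schedule symbol for a system with `W` channels: `T m` means "transmit on
channel `m`" and `R r` means "receive on channel `r`". -/
inductive SchedSym (W : ℕ) where
  | T : Fin W → SchedSym W
  | R : Fin W → SchedSym W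
deriving DecidableEq

/-- `IsScheduleSet W K L G s` says that `s` is an `(M,K,L)`-schedule sequence set
(for any number of channels `M ≥ W`) with respect to the partition of the `K` nodes
into the `W` groups given by the group-assignment map `G` (node `i` lies in group
`G i`). Sequences are modeled as `ℕ → SchedSym W`, indexed modulo `L`.

* `own_channel`: a node in group `m` only uses the transmit symbol `T m`;
* `intra`: intra-group requirement (eq. (1) of the paper) for all offsets `τ ∈ Z_L^K`;
* `inter`: inter-group requirement (eq. (2) of the paper) for all offsets `τ ∈ Z_L^K`. -/
structure IsScheduleSet (W K L : ℕ) (G : Fin K → Fin W)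
    (s : Fin K → ℕ → SchedSym W) : Prop where
  own_channel : ∀ (i : Fin K) (t : ℕ) (m : Fin W), s i t = SchedSym.T m → m = G i
  intra : ∀ τ : Fin K → ℕ, (∀ i, τ i < L) → ∀ i j : Fin K, i ≠ j → G i = G j →
    ∃ t < L, s i ((t + τ i) % L) = SchedSym.T (G i) ∧
      s j ((t + τ j) % L) = SchedSym.R (G i) ∧
      ∀ x : Fin K, x ≠ i → x ≠ j → G x = G i → s x ((t + τ x) % L) ≠ SchedSym.T (G i)
  inter : ∀ τ : Fin K → ℕ, (∀ i, τ i < L) → ∀ i j : Fin K, G i ≠ G j →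
    ∃ t < L, s i ((t + τ i) % L) = SchedSym.T (G i) ∧
      s j ((t + τ j) % L) = SchedSym.R (G i) ∧
      ∀ x : Fin K, x ≠ i → G x = G i → s x ((t + τ x) % L) ≠ SchedSym.T (G i)

/-- The size of group `m` under the group-assignment map `G`. -/
def groupSize {W K : ℕ} (G : Fin K → Fin W) (m : Fin W) : ℕ :=
  (Finset.univ.filter (fun i => G i = m)).card

/-- for an `(M,K,L)`-schedule sequence set with respect to a
partition into `W` nonempty groups with smallest group size `k ≥ 2`, if `α_i` is the
number of transmitting symbols `T_{G i}` in `s_i` and `β_j^m` the number of receiving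
symbols `R_m` in `s_j` (over one period), then `α_i · β_j^{G i} ≥ (k−1)·L` for all
`i ≠ j`. -/
theorem schedule_set_weight_product_bound
    (M K L W k : ℕ) (hL : 0 < L) (hW : 1 ≤ W) (hWM : W ≤ M) (hMK : M ≤ K)
    (hk : 2 ≤ k)
    (G : Fin K → Fin W) (hG : Function.Surjective G)
    (hkmin : ∀ m : Fin W, k ≤ groupSize G m)
    (hkex : ∃ m : Fin W, groupSize G m = k)
    (s : Fin K → ℕ → SchedSym W) (hs : IsScheduleSet W K L G s) :
    ∀ i j : Fin K, i ≠ j →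
      (k - 1) * L ≤
        ((Finset.range L).filter (fun t => s i t = SchedSym.T (G i))).card *
        ((Finset.range L).filter (fun t => s j t = SchedSym.R (G i))).card := by
  classical
  intro i j hij
  -- every node transmits at some time in one period
  have htrans : ∀ x : Fin K, ∃ t0, t0 < L ∧ s x t0 = SchedSym.T (G x) := by
    intro x
    have hcard : 1 < (Finset.univ.filter (fun y : Fin K => G y = G x)).card := by
      have := hkmin (G x); unfold groupSize at this; omega
    obtain ⟨y, hy, hyx⟩ := Finset.exists_mem_ne hcard x
    have hyG : G y = G x := by simpa using hy
    obtain ⟨t, htL, h1, -, -⟩ :=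
      hs.intra (fun _ => 0) (fun _ => hL) x y (Ne.symm hyx) hyG.symm
    refine ⟨t, htL, ?_⟩
    simpa [Nat.mod_eq_of_lt htL] using h1
  choose tt httL htts using htrans
  set Sd : ℕ → Finset ℕ := fun d => (Finset.range L).filter
      (fun t => s i t = SchedSym.T (G i) ∧ s j ((t + d) % L) = SchedSym.R (G i))
    with hSddef
  have hSd : ∀ d, d < L → k - 1 ≤ (Sd d).card := by
    intro d hd
    by_contra hlt
    push_neg at hlt
    set X : Finset (Fin K) :=
      Finset.univ.filter (fun x : Fin K => G x = G i ∧ x ≠ i ∧ x ≠ j) with hX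
    have hXcard : k - 2 ≤ X.card := by
      have h1 : k ≤ (Finset.univ.filter (fun x : Fin K => G x = G i)).card := hkmin (G i)
      have h2 : (Finset.univ.filter (fun x : Fin K => G x = G i)).card ≤ X.card + 2 := by
        have hsub : (Finset.univ.filter (fun x : Fin K => G x = G i)) ⊆
            X ∪ {i, j} := by
          intro x hx
          simp only [Finset.mem_filter, Finset.mem_univ, true_and] at hx
          by_cases hxi : x = i
          · simp [hxi]
          by_cases hxj : x = j
          · simp [hxj]
          · exact Finset.mem_union_left _ (by simp [hX, hx, hxi, hxj])
        calc (Finset.univ.filter (fun x : Fin K => G x = G i)).card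
            ≤ (X ∪ ({i, j} : Finset (Fin K))).card := Finset.card_le_card hsub
          _ ≤ X.card + ({i, j} : Finset (Fin K)).card := Finset.card_union_le _ _
          _ ≤ X.card + 2 := by
              have : ({i, j} : Finset (Fin K)).card ≤ 2 :=
                (Finset.card_insert_le _ _).trans (by simp)
              omega
      omega
    have hle : Fintype.card {t // t ∈ Sd d} ≤ Fintype.card {x // x ∈ X} := by
      simpa [Fintype.card_coe] using (by omega : (Sd d).card ≤ X.card)
    obtain ⟨g⟩ := Function.Embedding.nonempty_of_card_le hle
    set τ : Fin K → ℕ := fun x =>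
      if x = i then 0 else if x = j then d
      else if h : ∃ ts : {t // t ∈ Sd d}, (g ts : Fin K) = x
        then (tt x + L - (h.choose : {t // t ∈ Sd d}).1) % L else 0
      with hτdef
    have hτlt : ∀ x, τ x < L := by
      intro x
      simp only [hτdef]
      split
      · exact hL
      split
      · exact hd
      split
      · exact Nat.mod_lt _ hL
      · exact hL
    have hτi : τ i = 0 := by simp [hτdef]
    have hτj : τ j = d := by simp [hτdef, Ne.symm hij]
    have hblock : ∀ (t : ℕ) (ht : t ∈ Sd d),
        (g ⟨t, ht⟩ : Fin K) ≠ i ∧ (g ⟨t, ht⟩ : Fin K) ≠ j ∧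
        G (g ⟨t, ht⟩ : Fin K) = G i ∧
        s (g ⟨t, ht⟩ : Fin K) ((t + τ (g ⟨t, ht⟩ : Fin K)) % L) = SchedSym.T (G i) := by
      intro t ht
      set x : Fin K := ((g ⟨t, ht⟩ : {x // x ∈ X}) : Fin K) with hxdef
      have hxX : (g ⟨t, ht⟩ : {x // x ∈ X}).1 ∈ X := (g ⟨t, ht⟩).2
      rw [← hxdef] at hxX
      simp only [hX, Finset.mem_filter, Finset.mem_univ, true_and] at hxX
      obtain ⟨hxG, hxi, hxj⟩ := hxX
      refine ⟨hxi, hxj, hxG, ?_⟩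
      have hex : ∃ ts : {t // t ∈ Sd d}, (g ts : Fin K) = x := ⟨⟨t, ht⟩, rfl⟩
      have hchoose : (hex.choose : {t // t ∈ Sd d}) = ⟨t, ht⟩ := by
        apply g.injective
        apply Subtype.ext
        exact hex.choose_spec
      have hτx : τ x = (tt x + L - t) % L := by
        simp only [hτdef, if_neg hxi, if_neg hxj, dif_pos hex, hchoose]
      have htL : t < L := by
        have h := ht
        simp only [hSddef, Finset.mem_filter, Finset.mem_range] at h
        exact h.1
      have hcalc : (t + (tt x + L - t) % L) % L = tt x := by
        have e1 : t + (tt x + L - t) = tt x + L := by omega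
        calc (t + (tt x + L - t) % L) % L = (t + (tt x + L - t)) % L :=
              Nat.add_mod_mod _ _ _
          _ = tt x := by rw [e1, Nat.add_mod_right, Nat.mod_eq_of_lt (httL x)]
      rw [hτx, hcalc, htts x, hxG]
    have hτSd : ∀ t, t < L → s i ((t + τ i) % L) = SchedSym.T (G i) →
        s j ((t + τ j) % L) = SchedSym.R (G i) → t ∈ Sd d := by
      intro t htL h1 h2
      rw [hτi] at h1; rw [hτj] at h2
      simp only [hSddef, Finset.mem_filter, Finset.mem_range]
      refine ⟨htL, ?_, h2⟩
      simpa [Nat.mod_eq_of_lt htL] using h1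
    by_cases hGij : G i = G j
    · obtain ⟨t, htL, h1, h2, h3⟩ := hs.intra τ hτlt i j hij hGij
      have htSd : t ∈ Sd d := hτSd t htL h1 h2
      obtain ⟨hxi, hxj, hxG, hxT⟩ := hblock t htSd
      exact h3 _ hxi hxj hxG hxT
    · obtain ⟨t, htL, h1, h2, h3⟩ := hs.inter τ hτlt i j hGij
      have htSd : t ∈ Sd d := hτSd t htL h1 h2
      obtain ⟨hxi, hxj, hxG, hxT⟩ := hblock t htSd
      exact h3 _ hxi hxG hxT
  have hsum1 : (k - 1) * L ≤ ∑ d ∈ Finset.range L, (Sd d).card := by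
    calc (k - 1) * L = ∑ _d ∈ Finset.range L, (k - 1) := by
          simp [mul_comm]
      _ ≤ _ := Finset.sum_le_sum (fun d hd => hSd d (Finset.mem_range.mp hd))
  have hsum2 : ∑ d ∈ Finset.range L, (Sd d).card ≤
      (((Finset.range L).filter (fun t => s i t = SchedSym.T (G i))) ×ˢ
       ((Finset.range L).filter (fun t => s j t = SchedSym.R (G i)))).card := by
    rw [← Finset.card_sigma]
    apply Finset.card_le_card_of_injOn (fun p => (p.2, (p.2 + p.1) % L))
    · intro p hp
      simp only [Finset.mem_coe, Finset.mem_sigma, Finset.mem_range, hSddef, Finset.mem_filter] at hp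
      obtain ⟨hd, ⟨ht, h1, h2⟩⟩ := hp
      simp only [Finset.mem_coe, Finset.mem_product, Finset.mem_filter, Finset.mem_range]
      exact ⟨⟨ht, h1⟩, Nat.mod_lt _ hL, h2⟩
    · intro p hp q hq heq
      simp only [Finset.mem_coe, Finset.mem_sigma, Finset.mem_range] at hp hq
      simp only [Prod.mk.injEq] at heq
      obtain ⟨h1, h2⟩ := heq
      have hdd : p.1 = q.1 := by
        rw [h1] at h2
        have hmod : p.1 ≡ q.1 [MOD L] := Nat.ModEq.add_left_cancel' q.2 h2
        rw [Nat.ModEq, Nat.mod_eq_of_lt hp.1, Nat.mod_eq_of_lt hq.1] at hmod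
        exact hmod
      exact Sigma.ext hdd (heq_of_eq h1)
  have hcp := Finset.card_product
      ((Finset.range L).filter (fun t => s i t = SchedSym.T (G i)))
      ((Finset.range L).filter (fun t => s j t = SchedSym.R (G i)))
  omega
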